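/- Let x = (x₁,…,xₙ) and y = (y₁,…,yₙ) be vectors of non-negative reals, both in non-increasing order, such that Σ_{i=1}^k xᵢ ≥ Σ_{i=1}^k yᵢ for every k = 1, …, n. Then for every real p > 1, ‖x‖_p ≥ ‖y‖_p, with equality if and only if x = y. -/

import Mathlib

open Finset

-- Abel summation nonnegativity
lemma abel_nonneg : ∀ (n : ℕ) (c d : ℕ → ℝ),
    (∀ i j, i ≤ j → j < n → c j ≤ c i) → (∀ i, i < n → 0 ≤ c i) →
    (∀ k, k < n → 0 ≤ ∑ i ∈ range (k+1), d i) →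
    0 ≤ ∑ i ∈ range n, c i * d i := by
  intro n
  induction n with
  | zero => intro c d _ _ _; simp
  | succ n ih =>
    intro c d hanti hpos hS
    have key : ∑ i ∈ range (n+1), c i * d i
        = ∑ i ∈ range n, (c i - c n) * d i + c n * ∑ i ∈ range (n+1), d i := by
      have : ∑ i ∈ range (n+1), (c i - c n) * d i = ∑ i ∈ range n, (c i - c n) * d i := by
        rw [Finset.sum_range_succ]; simp
      rw [← this, Finset.mul_sum, ← Finset.sum_add_distrib]
      apply Finset.sum_congr rfl
      intro i _; ring
    rw [key]
    have h1 : 0 ≤ ∑ i ∈ range n, (c i - c n) * d i := by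
      apply ih
      · intro i j hij hj; have := hanti i j hij (by omega); linarith
      · intro i hi
        have := hanti i n (by omega) (by omega); linarith
      · intro k hk; exact hS k (by omega)
    have h2 : 0 ≤ c n * ∑ i ∈ range (n+1), d i :=
      mul_nonneg (hpos n (by omega)) (hS n (by omega))
    linarith

-- tangent line inequality, strict
lemma tangent_lt {p : ℝ} (hp : 1 < p) {a b : ℝ} (ha : 0 ≤ a) (hb : 0 ≤ b) (hab : a ≠ b) :
    b ^ p + p * b ^ (p-1) * (a - b) < a ^ p := by
  rcases hb.eq_or_lt with h | h
  · have hb0 : b = 0 := h.symm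
    subst hb0
    have ha' : 0 < a := lt_of_le_of_ne ha (Ne.symm hab)
    rw [Real.zero_rpow (by linarith), Real.zero_rpow (by linarith)]
    simpa using Real.rpow_pos_of_pos ha' p
  · have hbne : b ≠ 0 := ne_of_gt h
    set s : ℝ := a / b - 1 with hs
    have hs1 : -1 ≤ s := by
      have : 0 ≤ a / b := div_nonneg ha h.le
      simp [hs]; linarith
    have hs0 : s ≠ 0 := by
      simp only [hs]
      intro hc
      apply hab
      field_simp at hc
      linarith
    have hbern := one_add_mul_self_lt_rpow_one_add hs1 hs0 hp
    have hbp : (0:ℝ) < b ^ p := Real.rpow_pos_of_pos h p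
    have hmul : (1 + p * s) * b ^ p < (1 + s) ^ p * b ^ p :=
      mul_lt_mul_of_pos_right hbern hbp
    have h1s : 1 + s = a / b := by simp [hs]
    have hrhs : (1 + s) ^ p * b ^ p = a ^ p := by
      rw [h1s, ← Real.mul_rpow (div_nonneg ha h.le) h.le, div_mul_cancel₀ _ hbne]
    have hlhs : (1 + p * s) * b ^ p = b ^ p + p * b ^ (p-1) * (a - b) := by
      have hb1 : b ^ (p-1) = b ^ p / b := by
        rw [Real.rpow_sub h, Real.rpow_one]
      rw [hb1]
      field_simp [hs]
      have : s * b = a - b := by rw [hs, sub_mul, div_mul_cancel₀ _ hbne, one_mul]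
      linear_combination p * this
    rw [hrhs, hlhs] at hmul
    exact hmul

/-- If x weakly majorizes y (both with non-negative, non-increasing entries),
then ‖x‖_p ≥ ‖y‖_p for every p > 1, with equality iff x = y. -/
theorem stmt_9 {n : ℕ} (x y : Fin n → ℝ)
    (hx0 : ∀ i, 0 ≤ x i) (hy0 : ∀ i, 0 ≤ y i)
    (hxmono : Antitone x) (hymono : Antitone y)
    (hmaj : ∀ k : Fin n, ∑ i ∈ Finset.Iic k, y i ≤ ∑ i ∈ Finset.Iic k, x i)
    (p : ℝ) (hp : 1 < p) :
    (∑ i, y i ^ p) ^ (1 / p) ≤ (∑ i, x i ^ p) ^ (1 / p) ∧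
    ((∑ i, y i ^ p) ^ (1 / p) = (∑ i, x i ^ p) ^ (1 / p) ↔ x = y) := by
  have tangent_le : ∀ {a b : ℝ}, 0 ≤ a → 0 ≤ b →
      b ^ p + p * b ^ (p-1) * (a - b) ≤ a ^ p := by
    intro a b ha hb
    rcases eq_or_ne a b with rfl | hab
    · simp
    · exact (tangent_lt hp ha hb hab).le
  -- conversion lemma
  have hconv : ∀ (g : Fin n → ℝ) (k : ℕ) (hk : k < n),
      ∑ i ∈ Iic (⟨k, hk⟩ : Fin n), g i
        = ∑ j ∈ range (k+1), (if h : j < n then g ⟨j, h⟩ else 0) := by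
    intro g k hk
    apply Finset.sum_bij (fun (a : Fin n) _ => (a : ℕ))
    · intro a ha
      simp only [Finset.mem_Iic, Fin.le_def] at ha
      simp only [Finset.mem_range]; omega
    · intro a _ b _ hab; exact Fin.val_injective hab
    · intro b hb
      simp only [Finset.mem_range] at hb
      exact ⟨⟨b, by omega⟩, by simp [Finset.mem_Iic, Fin.le_def]; omega, rfl⟩
    · intro a _; simp [a.isLt]
  set c : ℕ → ℝ := fun i => if h : i < n then p * y ⟨i, h⟩ ^ (p-1) else 0 with hc
  set d : ℕ → ℝ := fun i => if h : i < n then x ⟨i, h⟩ - y ⟨i, h⟩ else 0 with hd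
  have habel : 0 ≤ ∑ i : Fin n, p * y i ^ (p-1) * (x i - y i) := by
    have key := abel_nonneg n c d ?_ ?_ ?_
    · have : ∑ i : Fin n, p * y i ^ (p-1) * (x i - y i)
          = ∑ i ∈ range n, c i * d i := by
        rw [← Fin.sum_univ_eq_sum_range (fun i => c i * d i) n]
        apply Finset.sum_congr rfl
        intro i _
        simp [hc, hd, i.isLt]
      rw [this]; exact key
    · intro i j hij hj
      simp only [hc]
      rw [dif_pos hj, dif_pos (lt_of_le_of_lt hij hj)]
      apply mul_le_mul_of_nonneg_left _ (by linarith)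
      exact Real.rpow_le_rpow (hy0 _) (hymono (by simpa [Fin.le_def])) (by linarith)
    · intro i hi
      simp only [hc]
      rw [dif_pos hi]
      exact mul_nonneg (by linarith) (Real.rpow_nonneg (hy0 _) _)
    · intro k hk
      have := hconv (fun i => x i - y i) k hk
      simp only [hd]
      rw [← this, Finset.sum_sub_distrib]
      linarith [hmaj (⟨k, hk⟩ : Fin n)]
  have hsum_le : ∑ i, y i ^ p + ∑ i, p * y i ^ (p-1) * (x i - y i) ≤ ∑ i, x i ^ p := by
    rw [← Finset.sum_add_distrib]
    exact Finset.sum_le_sum fun i _ => tangent_le (hx0 i) (hy0 i)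
  have hBA : ∑ i, y i ^ p ≤ ∑ i, x i ^ p := by linarith
  have hynn : 0 ≤ ∑ i, y i ^ p :=
    Finset.sum_nonneg fun i _ => Real.rpow_nonneg (hy0 i) p
  have hstrict : x ≠ y → ∑ i, y i ^ p < ∑ i, x i ^ p := by
    intro hne
    obtain ⟨j, hj⟩ : ∃ j, x j ≠ y j := Function.ne_iff.mp hne
    have hlt : ∑ i, (y i ^ p + p * y i ^ (p-1) * (x i - y i)) < ∑ i, x i ^ p := by
      apply Finset.sum_lt_sum (fun i _ => tangent_le (hx0 i) (hy0 i))
      exact ⟨j, Finset.mem_univ j, tangent_lt hp (hx0 j) (hy0 j) hj⟩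
    rw [Finset.sum_add_distrib] at hlt
    linarith
  refine ⟨Real.rpow_le_rpow hynn hBA (by positivity), ?_, ?_⟩
  · intro heq
    by_contra hne
    have h1 := hstrict hne
    have h2 := Real.rpow_lt_rpow hynn h1 (by positivity : (0:ℝ) < 1 / p)
    rw [heq] at h2
    exact lt_irrefl _ h2
  · rintro rfl; rfl
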